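/- With notation as in the double companion matrix, for any m ∈ ℤ, the m-th power of the n×n companion matrix C_{1^n}(A) (the submatrix of C(A) on columns 1, 2, …, n, i.e., with (l,p) entry the coefficient of x^{l−1} in the degree-<n polynomial taking value a_i^{p} at each a_i) equals C_{m^n}(A), the submatrix of C(A) on columns m, m+1, …, m+n−1. -/

import Mathlib

open Polynomial Finset

/-- The submatrix `C_I(A)` of the double companion matrix on columns
`i₁ + 0, i₂ + 1, …, i_n + n − 1`: its `p`-th column is the coefficient vector of
the unique degree `< n` polynomial taking value `aᵢ^{i_p + p − 1}` at each `aᵢ`. -/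
noncomputable def companionSub {K : Type*} [Field K] {n : ℕ} [DecidableEq K]
    (a : Fin n → K) (I : Fin n → ℤ) : Matrix (Fin n) (Fin n) K :=
  Matrix.of fun l p =>
    (Lagrange.interpolate Finset.univ a (fun i => a i ^ (I p + (p : ℤ)))).coeff l

lemma companion_key {K : Type*} [Field K] [DecidableEq K] {n : ℕ}
    (a : Fin n → K) (ha : Function.Injective a) (h0 : ∀ i, a i ≠ 0) (m : ℤ) :
    Matrix.vandermonde a * companionSub a (fun _ => m)
      = Matrix.diagonal (fun i => a i ^ m) * Matrix.vandermonde a := by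
  ext i p
  rw [Matrix.mul_apply, Matrix.diagonal_mul]
  set f := Lagrange.interpolate Finset.univ a (fun j => a j ^ (m + (p : ℤ))) with hf
  have hdeg : f.natDegree < n := by
    have h1 : f.degree < n := by
      have := Lagrange.degree_interpolate_lt (s := Finset.univ)
        (r := fun j => a j ^ (m + (p : ℤ))) (Set.injOn_of_injective ha)
      simpa only [Finset.card_univ, Fintype.card_fin] using this
    rcases eq_or_ne f 0 with h | h
    · simpa [h] using i.pos
    · exact (Polynomial.natDegree_lt_iff_degree_lt h).mpr h1
  have heval : f.eval (a i) = a i ^ (m + (p : ℤ)) :=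
    Lagrange.eval_interpolate_at_node _ (Set.injOn_of_injective ha) (mem_univ i)
  calc ∑ l, Matrix.vandermonde a i l * companionSub a (fun _ => m) l p
      = ∑ l ∈ Finset.range n, f.coeff l * a i ^ l := by
        rw [← Fin.sum_univ_eq_sum_range]
        refine Finset.sum_congr rfl fun l _ => ?_
        show a i ^ (l : ℕ) * f.coeff l = f.coeff l * a i ^ (l : ℕ)
        ring
    _ = f.eval (a i) := (Polynomial.eval_eq_sum_range' hdeg _).symm
    _ = a i ^ m * Matrix.vandermonde a i p := by
        rw [heval, zpow_add₀ (h0 i)]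
        simp [Matrix.vandermonde]

/-- `(C_{1ⁿ}(A))^m = C_{mⁿ}(A)` for every `m ∈ ℤ`. -/
theorem companion_zpow {K : Type*} [Field K] [DecidableEq K] {n : ℕ}
    (a : Fin n → K) (ha : Function.Injective a) (h0 : ∀ i, a i ≠ 0) (m : ℤ) :
    (companionSub a fun _ => (1 : ℤ)) ^ m = companionSub a fun _ => m := by
  -- the Vandermonde matrix is invertible
  have hVdet : IsUnit (Matrix.vandermonde a).det := by
    rw [Matrix.det_vandermonde, isUnit_iff_ne_zero]
    refine Finset.prod_ne_zero_iff.mpr fun i _ => Finset.prod_ne_zero_iff.mpr fun j hj => ?_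
    exact sub_ne_zero_of_ne fun h => (Finset.mem_Ioi.mp hj).ne' (ha h)
  have hVU : IsUnit (Matrix.vandermonde a) := (Matrix.isUnit_iff_isUnit_det _).mpr hVdet
  set v : (Matrix (Fin n) (Fin n) K)ˣ := hVU.unit with hv
  have hvc : (v : Matrix (Fin n) (Fin n) K) = Matrix.vandermonde a := hVU.unit_spec
  -- the diagonal matrix as a unit
  set d : (Matrix (Fin n) (Fin n) K)ˣ :=
    ⟨Matrix.diagonal a, Matrix.diagonal fun i => (a i)⁻¹,
      by rw [Matrix.diagonal_mul_diagonal]; simp [Matrix.diagonal_one, mul_inv_cancel₀, h0]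
        , by rw [Matrix.diagonal_mul_diagonal]; simp [inv_mul_cancel₀, h0]⟩ with hd
  have hdinv : ((d⁻¹ : _ˣ) : Matrix (Fin n) (Fin n) K) = Matrix.diagonal fun i => (a i)⁻¹ := rfl
  have hdz : ∀ k : ℤ, ((d ^ k : _ˣ) : Matrix (Fin n) (Fin n) K)
      = Matrix.diagonal fun i => a i ^ k := by
    intro k
    induction k using Int.induction_on with
    | zero => simp [Matrix.diagonal_one]
    | succ k ih =>
        rw [zpow_add_one, Units.val_mul, ih]
        show _ * Matrix.diagonal a = _
        rw [Matrix.diagonal_mul_diagonal]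
        exact congrArg Matrix.diagonal (funext fun i => (zpow_add_one₀ (h0 i) k).symm)
    | pred k ih =>
        rw [zpow_sub_one, Units.val_mul, ih, hdinv, Matrix.diagonal_mul_diagonal]
        exact congrArg Matrix.diagonal (funext fun i => (zpow_sub_one₀ (h0 i) (-k)).symm)
  -- C_m = v⁻¹ * d^m * v
  have hC : ∀ k : ℤ, companionSub a (fun _ => k)
      = ((v⁻¹ * d ^ k * v : _ˣ) : Matrix (Fin n) (Fin n) K) := by
    intro k
    have key := companion_key a ha h0 k
    rw [← hvc, ← hdz k] at key
    calc companionSub a (fun _ => k)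
        = ↑(v⁻¹) * ((v : Matrix (Fin n) (Fin n) K) * companionSub a (fun _ => k)) := by
          rw [← mul_assoc, ← Units.val_mul, inv_mul_cancel, Units.val_one, one_mul]
      _ = ↑(v⁻¹) * (↑(d ^ k) * ↑v) := by rw [key]
      _ = ↑(v⁻¹ * d ^ k * v) := by rw [Units.val_mul, Units.val_mul, mul_assoc]
  have h1 : companionSub a (fun _ => (1 : ℤ)) = ((v⁻¹ * d * v : _ˣ) : _) := by
    rw [hC 1, zpow_one]
  rw [h1, ← Matrix.coe_units_zpow]
  rw [hC m]
  congr 1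
  have : v⁻¹ * d * v = v⁻¹ * d * (v⁻¹)⁻¹ := by rw [inv_inv]
  rw [this, conj_zpow, inv_inv]
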